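/- Let n ≥ 1 and 1 ≤ p ≤ 2n-2. The eigenvalues of the matrix A(τ_p) of quantum multiplication by τ_p on H•(OG(1,2n+1)) are all simple if and only if p and 2n-1 are relatively prime. -/

import Mathlib

open Matrix Polynomial

/-- The matrix of quantum multiplication by τ₁ on H•(OG(1,2n+1)):
M[i+1][i] = 1 for 0 ≤ i ≤ 2n-2 except M[n][n-1] = 2, M[0][2n-2] = 1,
M[1][2n-1] = 1, all other entries zero. -/
def M (n : ℕ) : Matrix (Fin (2*n)) (Fin (2*n)) ℂ :=
  Matrix.of fun i j =>
    if (i : ℕ) = (j : ℕ) + 1 then (if (i : ℕ) = n then 2 else 1)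
    else if (i : ℕ) = 0 ∧ (j : ℕ) = 2*n - 2 then 1
    else if (i : ℕ) = 1 ∧ (j : ℕ) = 2*n - 1 then 1
    else 0


lemma eval_charpoly' {m : ℕ} (A : Matrix (Fin m) (Fin m) ℂ) (x : ℂ) :
    eval x A.charpoly = det (x • (1 : Matrix (Fin m) (Fin m) ℂ) - A) := by
  rw [Matrix.charpoly, ← Polynomial.coe_evalRingHom, RingHom.map_det]
  congr 1
  ext i j
  by_cases h : i = j <;>
    simp [h, charmatrix_apply, Matrix.one_apply, Matrix.diagonal_apply]

lemma card_nthRoots_one (p : ℕ) (hp : p ≠ 0) : Multiset.card (nthRoots p (1:ℂ)) = p := by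
  have hsplits : (X ^ p - C (1:ℂ)).Splits := IsAlgClosed.splits _
  have := (splits_iff_card_roots).mp hsplits
  rw [natDegree_X_pow_sub_C] at this
  simpa [nthRoots] using this

lemma prod_nthRoots_one (p : ℕ) (hp : p ≠ 0) :
    (X ^ p - C (1:ℂ)) = ((nthRoots p (1:ℂ)).map fun ζ => X - C ζ).prod := by
  have hsplits : (X ^ p - C (1:ℂ)).Splits := IsAlgClosed.splits _
  have hmonic : (X ^ p - C (1:ℂ)).Monic := monic_X_pow_sub_C _ hp
  simpa [nthRoots] using hsplits.eq_prod_roots_of_monic hmonic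

lemma key_scalar (p : ℕ) (hp : p ≠ 0) (β y : ℂ) :
    ((nthRoots p (1:ℂ)).map fun ζ => β - ζ * y).prod = β ^ p - y ^ p := by
  have hcard := card_nthRoots_one p hp
  by_cases hy : y = 0
  · subst hy
    simp only [mul_zero, sub_zero]
    rw [Multiset.map_const', Multiset.prod_replicate, hcard]
    simp [zero_pow hp]
  · have h1 : ((nthRoots p (1:ℂ)).map fun ζ => β - ζ * y).prod
        = ((nthRoots p (1:ℂ)).map fun ζ => y * (β / y - ζ)).prod := by
      refine congrArg _ (Multiset.map_congr rfl fun ζ _ => ?_)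
      field_simp
    have h2 : ((nthRoots p (1:ℂ)).map fun ζ => y * (β / y - ζ)).prod
        = y ^ p * ((nthRoots p (1:ℂ)).map fun ζ => β / y - ζ).prod := by
      rw [Multiset.prod_map_mul, Multiset.map_const', Multiset.prod_replicate, hcard]
    have h3 : ((nthRoots p (1:ℂ)).map fun ζ => β / y - ζ).prod = (β / y) ^ p - 1 := by
      have := congrArg (eval (β / y)) (prod_nthRoots_one p hp)
      simpa [eval_multiset_prod, Multiset.map_map, Function.comp] using this.symm
    rw [h1, h2, h3]
    rw [div_pow, mul_sub, mul_div_assoc', mul_comm (y ^ p) (β ^ p), mul_div_assoc,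
      div_self (pow_ne_zero p hy), mul_one, mul_one]

lemma charpoly_smul_pow {m : ℕ} (A : Matrix (Fin m) (Fin m) ℂ) (c : ℂ) (hc : c ≠ 0)
    (p : ℕ) (hp : p ≠ 0) :
    (c • A ^ p).charpoly
      = (((A.charpoly.roots.map fun l => c * l ^ p)).map fun μ => X - C μ).prod := by
  have hsplits : A.charpoly.Splits := IsAlgClosed.splits _
  have hcard : Multiset.card A.charpoly.roots = m := by
    rw [splits_iff_card_roots.mp hsplits, Matrix.charpoly_natDegree_eq_dim, Fintype.card_fin]
  have hprod : A.charpoly = (A.charpoly.roots.map fun l => X - C l).prod :=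
    hsplits.eq_prod_roots_of_monic (Matrix.charpoly_monic A)
  set S := A.charpoly.roots with hS
  apply Polynomial.funext
  intro x
  -- RHS evaluation
  have hRHS : eval x (((S.map fun l => c * l ^ p)).map fun μ => X - C μ).prod
      = (S.map fun l => x - c * l ^ p).prod := by
    rw [eval_multiset_prod, Multiset.map_map, Multiset.map_map]
    simp [Function.comp]
  rw [hRHS, eval_charpoly']
  -- pick β with β ^ p = x / c
  obtain ⟨β, hβ⟩ : ∃ β : ℂ, β ^ p = x / c := by
    obtain ⟨β, hβ⟩ := IsAlgClosed.exists_root (X ^ p - C (x / c))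
      (by rw [degree_X_pow_sub_C (Nat.pos_of_ne_zero hp)]; exact_mod_cast (Nat.cast_ne_zero).2 hp)
    exact ⟨β, by have := hβ; simpa [IsRoot, sub_eq_zero] using this⟩
  have hx : c * β ^ p = x := by rw [hβ]; field_simp
  -- LHS
  have step1 : x • (1 : Matrix (Fin m) (Fin m) ℂ) - c • A ^ p
      = c • ((β ^ p) • (1 : Matrix (Fin m) (Fin m) ℂ) - A ^ p) := by
    rw [smul_sub, smul_smul, hx]
  have step2 : (β ^ p) • (1 : Matrix (Fin m) (Fin m) ℂ) - A ^ p
      = aeval A (C (β ^ p) - X ^ p) := by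
    rw [map_sub, aeval_X_pow, aeval_C, Algebra.algebraMap_eq_smul_one]
  have hq : (C (β ^ p) - X ^ p : ℂ[X])
      = ((nthRoots p (1:ℂ)).map fun ζ => C β - C ζ * X).prod := by
    apply Polynomial.funext
    intro y
    rw [eval_multiset_prod, Multiset.map_map]
    have := key_scalar p hp β y
    simpa [Function.comp] using this.symm
  -- multiplicativity of det ∘ aeval A
  have hdet : det (aeval A (C (β ^ p) - X ^ p))
      = ((nthRoots p (1:ℂ)).map fun ζ => det (aeval A (C β - C ζ * X))).prod := by
    rw [hq]
    let h : ℂ[X] →* Matrix (Fin m) (Fin m) ℂ := (aeval A : ℂ[X] →ₐ[ℂ] _).toRingHom.toMonoidHom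
    let g : ℂ[X] →* ℂ := Matrix.detMonoidHom.comp h
    have : ∀ q : ℂ[X], det (aeval A q) = g q := fun q => rfl
    rw [this, map_multiset_prod, Multiset.map_map]
    simp [g, h, Function.comp]
  have hfactor : ∀ ζ ∈ nthRoots p (1:ℂ),
      det (aeval A (C β - C ζ * X)) = (S.map fun l => β - ζ * l).prod := by
    intro ζ hζ
    have hζp : ζ ^ p = 1 := (mem_nthRoots (Nat.pos_of_ne_zero hp)).1 hζ
    have hζ0 : ζ ≠ 0 := by
      intro h; rw [h, zero_pow hp] at hζp; exact zero_ne_one hζp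
    have e1 : aeval A (C β - C ζ * X) = β • (1 : Matrix (Fin m) (Fin m) ℂ) - ζ • A := by
      simp only [map_sub, _root_.map_mul, aeval_X, aeval_C, Algebra.algebraMap_eq_smul_one,
        smul_one_mul]
    have e2 : β • (1 : Matrix (Fin m) (Fin m) ℂ) - ζ • A
        = ζ • ((β / ζ) • (1 : Matrix (Fin m) (Fin m) ℂ) - A) := by
      rw [smul_sub, smul_smul]
      field_simp
    rw [e1, e2, Matrix.det_smul, ← eval_charpoly', hprod, eval_multiset_prod, Multiset.map_map,
      Fintype.card_fin]
    simp only [Function.comp, eval_sub, eval_X, eval_C]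
    rw [← hcard, ← Multiset.prod_replicate, ← Multiset.map_const', ← Multiset.prod_map_mul]
    refine congrArg _ (Multiset.map_congr rfl fun l _ => ?_)
    field_simp
  calc det (x • (1 : Matrix (Fin m) (Fin m) ℂ) - c • A ^ p)
      = c ^ m * det ((β ^ p) • (1 : Matrix (Fin m) (Fin m) ℂ) - A ^ p) := by
        rw [step1, Matrix.det_smul, Fintype.card_fin]
    _ = c ^ m * ((nthRoots p (1:ℂ)).map fun ζ => (S.map fun l => β - ζ * l).prod).prod := by
        rw [step2, hdet]
        congr 1
        exact congrArg _ (Multiset.map_congr rfl hfactor)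
    _ = c ^ m * (S.map fun l => ((nthRoots p (1:ℂ)).map fun ζ => β - ζ * l).prod).prod := by
        rw [Multiset.prod_map_prod_map]
    _ = c ^ m * (S.map fun l => β ^ p - l ^ p).prod := by
        congr 1
        exact congrArg _ (Multiset.map_congr rfl fun l _ => key_scalar p hp β l)
    _ = (S.map fun l => x - c * l ^ p).prod := by
        rw [← hcard, ← Multiset.prod_replicate, ← Multiset.map_const', ← Multiset.prod_map_mul]
        refine congrArg _ (Multiset.map_congr rfl fun l _ => ?_)
        rw [mul_sub, hx]

noncomputable section AuxOG

/-- coefficient in `M^k *ᵥ e₀ = a n k • e_k` -/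
def aco (n k : ℕ) : ℂ := if k ≤ n - 1 then 1 else 2

lemma aco_ne_zero (n k : ℕ) : aco n k ≠ 0 := by
  unfold aco; split_ifs <;> norm_num

lemma M_mulVec_ind (n : ℕ) (k : ℕ) (hk : k < 2*n) (b : ℂ) :
    (M n) *ᵥ (fun j : Fin (2*n) => if (j:ℕ) = k then b else 0)
      = fun i => M n i ⟨k, hk⟩ * b := by
  funext i
  simp only [Matrix.mulVec, dotProduct]
  rw [Finset.sum_eq_single (⟨k, hk⟩ : Fin (2*n))]
  · simp
  · intro j _ hj
    have : (j:ℕ) ≠ k := fun h => hj (Fin.ext h)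
    simp [this]
  · intro h; exact absurd (Finset.mem_univ _) h

def e0 (n : ℕ) : Fin (2*n) → ℂ := fun j => if (j:ℕ) = 0 then 1 else 0

lemma pow_mulVec_e0 (n : ℕ) (hn : 2 ≤ n) (k : ℕ) (hk : k ≤ 2*n - 2) :
    (M n) ^ k *ᵥ e0 n = (fun i : Fin (2*n) => if (i:ℕ) = k then aco n k else 0) := by
  induction k with
  | zero =>
    have : aco n 0 = 1 := by unfold aco; split_ifs <;> simp_all
    rw [pow_zero, Matrix.one_mulVec, this]; rfl
  | succ k ih =>
    have hk' : k ≤ 2*n - 2 := by omega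
    rw [pow_succ', ← Matrix.mulVec_mulVec, ih hk',
      M_mulVec_ind n k (by omega) (aco n k)]
    funext i
    show M n i ⟨k, by omega⟩ * aco n k = _
    have hc : ((⟨k, by omega⟩ : Fin (2*n)) : ℕ) = k := rfl
    simp only [M, Matrix.of_apply, hc]
    have h2 : ¬((i:ℕ) = 0 ∧ k = 2*n - 2) := by omega
    have h3 : ¬((i:ℕ) = 1 ∧ k = 2*n - 1) := by omega
    by_cases h : (i:ℕ) = k + 1
    · rw [if_pos h, if_pos h, h]
      unfold aco
      split_ifs <;> first | omega | norm_num
    · rw [if_neg h, if_neg h2, if_neg h3, if_neg h, zero_mul]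

lemma pow_mulVec_e0_last (n : ℕ) (hn : 2 ≤ n) :
    (M n) ^ (2*n - 1) *ᵥ e0 n
      = (fun i : Fin (2*n) => if (i:ℕ) = 0 ∨ (i:ℕ) = 2*n - 1 then 2 else 0) := by
  have h1 : (M n) ^ (2*n - 1) = M n * (M n) ^ (2*n - 2) := by
    rw [← pow_succ']; congr 1; omega
  rw [h1, ← Matrix.mulVec_mulVec, pow_mulVec_e0 n hn (2*n-2) le_rfl,
    M_mulVec_ind n (2*n-2) (by omega) (aco n (2*n-2))]
  funext i
  show M n i ⟨2*n-2, by omega⟩ * aco n (2*n-2) = _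
  have hc : ((⟨2*n-2, by omega⟩ : Fin (2*n)) : ℕ) = 2*n-2 := rfl
  have ha : aco n (2*n-2) = 2 := by unfold aco; rw [if_neg (by omega)]
  simp only [M, Matrix.of_apply, hc, ha, and_true]
  split_ifs <;> first | omega | norm_num

lemma pow_mulVec_e0_2n (n : ℕ) (hn : 2 ≤ n) :
    (M n) ^ (2*n) *ᵥ e0 n = (fun i : Fin (2*n) => if (i:ℕ) = 1 then (4:ℂ) else 0) := by
  have h1 : (M n) ^ (2*n) = M n * (M n) ^ (2*n - 1) := by
    rw [← pow_succ']; congr 1; omega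
  rw [h1, ← Matrix.mulVec_mulVec, pow_mulVec_e0_last n hn]
  have hsplit : (fun i : Fin (2*n) => if (i:ℕ) = 0 ∨ (i:ℕ) = 2*n - 1 then (2:ℂ) else 0)
      = (fun j : Fin (2*n) => if (j:ℕ) = 0 then (2:ℂ) else 0)
        + (fun j : Fin (2*n) => if (j:ℕ) = 2*n-1 then (2:ℂ) else 0) := by
    funext j
    show _ = (if (j:ℕ) = 0 then (2:ℂ) else 0) + (if (j:ℕ) = 2*n-1 then (2:ℂ) else 0)
    split_ifs <;> first | omega | norm_num
  rw [hsplit, Matrix.mulVec_add, M_mulVec_ind n 0 (by omega) 2, M_mulVec_ind n (2*n-1) (by omega) 2]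
  funext i
  show M n i ⟨0, by omega⟩ * 2 + M n i ⟨2*n-1, by omega⟩ * 2 = _
  have hc0 : ((⟨0, by omega⟩ : Fin (2*n)) : ℕ) = 0 := rfl
  have hcl : ((⟨2*n-1, by omega⟩ : Fin (2*n)) : ℕ) = 2*n-1 := rfl
  simp only [M, Matrix.of_apply, hc0, hcl, and_true]
  split_ifs <;> first | omega | norm_num

lemma sum_mulVec {m : ℕ} {ι : Type*} (s : Finset ι) (f : ι → Matrix (Fin m) (Fin m) ℂ)
    (v : Fin m → ℂ) : (∑ i ∈ s, f i) *ᵥ v = ∑ i ∈ s, f i *ᵥ v := by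
  induction s using Finset.cons_induction with
  | empty => simp [Matrix.zero_mulVec]
  | cons a s ha ih => rw [Finset.sum_cons, Finset.sum_cons, Matrix.add_mulVec, ih]

lemma charpoly_M (n : ℕ) (hn : 2 ≤ n) :
    (M n).charpoly = X ^ (2*n) - C 4 * X := by
  set q : ℂ[X] := X ^ (2*n) - C 4 * X with hq
  have hdCX : (C (4:ℂ) * X).degree < ((2*n : ℕ) : WithBot ℕ) := by
    rw [degree_C_mul_X (by norm_num : (4:ℂ) ≠ 0)]
    exact_mod_cast (by omega : 1 < 2*n)
  have hdq : q.degree = ((2*n : ℕ) : WithBot ℕ) := by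
    rw [hq, degree_sub_eq_left_of_degree_lt (by rw [degree_X_pow]; exact hdCX), degree_X_pow]
  have hmq : q.Monic := monic_X_pow_sub hdCX
  have hdc : (M n).charpoly.degree = ((2*n : ℕ) : WithBot ℕ) := by
    rw [Matrix.charpoly_degree_eq_dim, Fintype.card_fin]
  have hmc := (M n).charpoly_monic
  set r := (M n).charpoly - q with hr
  have hrdeg : r.degree < ((2*n : ℕ) : WithBot ℕ) := by
    rw [hr, ← hdc]
    exact degree_sub_lt (hdc.trans hdq.symm) hmc.ne_zero
      (by rw [hmc.leadingCoeff, hmq.leadingCoeff])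
  have hrnat : r.natDegree < 2*n := by
    by_cases h0 : r = 0
    · rw [h0, natDegree_zero]; omega
    · exact (natDegree_lt_iff_degree_lt h0).mpr hrdeg
  have haevq : (aeval (M n) q) *ᵥ e0 n = 0 := by
    rw [hq, map_sub, aeval_X_pow, _root_.map_mul, aeval_C, aeval_X, Matrix.sub_mulVec,
      Algebra.algebraMap_eq_smul_one, smul_mul_assoc, one_mul, Matrix.smul_mulVec]
    have hM1 : M n *ᵥ e0 n = (fun i : Fin (2*n) => if (i:ℕ) = 1 then aco n 1 else 0) := by
      have := pow_mulVec_e0 n hn 1 (by omega)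
      rwa [pow_one] at this
    rw [pow_mulVec_e0_2n n hn, hM1]
    funext i
    have ha1 : aco n 1 = 1 := by unfold aco; rw [if_pos (by omega)]
    simp only [Pi.sub_apply, Pi.smul_apply, ha1, smul_eq_mul]
    split_ifs <;> norm_num
  have hre0 : (aeval (M n) r) *ᵥ e0 n = 0 := by
    rw [hr, map_sub, Matrix.sub_mulVec, Matrix.aeval_self_charpoly, Matrix.zero_mulVec, haevq,
      sub_zero]
  have hsum : ∑ i ∈ Finset.range (2*n), r.coeff i • ((M n)^i *ᵥ e0 n) = 0 := by
    rw [← hre0, aeval_eq_sum_range' hrnat, sum_mulVec]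
    exact Finset.sum_congr rfl fun i _ => (Matrix.smul_mulVec _ _ _).symm
  have happ : ∀ (jF : Fin (2*n)),
      (∑ i ∈ Finset.range (2*n-1), r.coeff i * (((M n)^i *ᵥ e0 n) jF))
        + r.coeff (2*n-1) * (((M n)^(2*n-1) *ᵥ e0 n) jF) = 0 := by
    intro jF
    have h := congrFun hsum jF
    simp only [Finset.sum_apply, Pi.smul_apply, smul_eq_mul, Pi.zero_apply] at h
    rwa [show Finset.range (2*n) = Finset.range ((2*n-1)+1) from by congr 1; omega,
      Finset.sum_range_succ] at h
  have hlast : r.coeff (2*n-1) = 0 := by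
    have h := happ ⟨2*n-1, by omega⟩
    rw [pow_mulVec_e0_last n hn] at h
    beta_reduce at h
    have hz : ∑ i ∈ Finset.range (2*n-1), r.coeff i * (((M n)^i *ᵥ e0 n) ⟨2*n-1, by omega⟩)
        = 0 := by
      refine Finset.sum_eq_zero fun i hi => ?_
      have hi' : i < 2*n-1 := Finset.mem_range.mp hi
      rw [pow_mulVec_e0 n hn i (by omega)]
      show r.coeff i * (if ((⟨2*n-1, by omega⟩ : Fin (2*n)) : ℕ) = i then aco n i else 0) = 0
      simp only [show ((⟨2*n-1, by omega⟩ : Fin (2*n)) : ℕ) = 2*n-1 from rfl]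
      rw [if_neg (by omega), mul_zero]
    rw [hz, zero_add] at h
    simp only [show ((⟨2*n-1, by omega⟩ : Fin (2*n)) : ℕ) = 2*n-1 from rfl] at h
    rw [if_pos (Or.inr trivial)] at h
    exact (mul_eq_zero.mp h).resolve_right (by norm_num)
  have hcoeffs : ∀ j, j < 2*n → r.coeff j = 0 := by
    intro j hj
    by_cases hjl : j = 2*n-1
    · rw [hjl]; exact hlast
    · have hj' : j < 2*n-1 := by omega
      have h := happ ⟨j, by omega⟩
      rw [hlast, zero_mul, add_zero] at h
      have hz : ∑ i ∈ Finset.range (2*n-1), r.coeff i * (((M n)^i *ᵥ e0 n) ⟨j, by omega⟩)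
          = r.coeff j * aco n j := by
        rw [Finset.sum_eq_single j]
        · rw [pow_mulVec_e0 n hn j (by omega)]
          show r.coeff j * (if ((⟨j, by omega⟩ : Fin (2*n)) : ℕ) = j then aco n j else 0) = _
          simp only [show ((⟨j, by omega⟩ : Fin (2*n)) : ℕ) = j from rfl]
          rw [if_pos trivial]
        · intro i hi hij
          have hi' : i < 2*n-1 := Finset.mem_range.mp hi
          rw [pow_mulVec_e0 n hn i (by omega)]
          show r.coeff i * (if ((⟨j, by omega⟩ : Fin (2*n)) : ℕ) = i then aco n i else 0) = 0
          simp only [show ((⟨j, by omega⟩ : Fin (2*n)) : ℕ) = j from rfl]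
          rw [if_neg (by omega), mul_zero]
        · intro hmem; exact absurd (Finset.mem_range.mpr hj') hmem
      rw [hz] at h
      rcases mul_eq_zero.mp h with h' | h'
      · exact h'
      · exact absurd h' (aco_ne_zero n j)
  have hr0 : r = 0 := by
    apply Polynomial.ext
    intro i
    rw [coeff_zero]
    by_cases hi : i < 2*n
    · exact hcoeffs i hi
    · exact coeff_eq_zero_of_natDegree_lt (by omega)
  have := sub_eq_zero.mp (hr ▸ hr0)
  exact this


theorem simple_eigenvalues_iff_coprime (n p : ℕ) (hn : 1 ≤ n) (hp1 : 1 ≤ p)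
    (hp2 : p ≤ 2*n - 2) :
    (∀ z : ℂ,
        (if p ≤ n - 1 then (M n) ^ p else (2⁻¹ : ℂ) • (M n) ^ p).charpoly.rootMultiplicity z
          ≤ 1) ↔
      Nat.Coprime p (2*n - 1) := by
  have hn2 : 2 ≤ n := by omega
  have hp0 : p ≠ 0 := by omega
  set c : ℂ := if p ≤ n - 1 then 1 else 2⁻¹ with hc
  have hc0 : c ≠ 0 := by rw [hc]; split_ifs <;> norm_num
  have hA : (if p ≤ n - 1 then (M n) ^ p else (2⁻¹ : ℂ) • (M n) ^ p) = c • (M n) ^ p := by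
    rw [hc]; split_ifs <;> simp [one_smul]
  rw [hA]
  have hch := charpoly_M n hn2
  have hfact : (M n).charpoly = X * (X ^ (2*n-1) - C 4) := by
    have hx : (X:ℂ[X]) * X ^ (2*n-1) = X ^ (2*n) := by
      rw [← pow_succ', show (2*n-1)+1 = 2*n from by omega]
    rw [hch, mul_sub, hx, mul_comm X (C 4)]
  set S := (M n).charpoly.roots with hSdef
  have hchne : (M n).charpoly ≠ 0 := (M n).charpoly_monic.ne_zero
  have hroot_iff : ∀ z : ℂ, z ∈ S ↔ (z = 0 ∨ z ^ (2*n-1) = 4) := by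
    intro z
    rw [hSdef, mem_roots hchne, IsRoot, hfact]
    simp only [eval_mul, eval_sub, eval_pow, eval_X, eval_C, mul_eq_zero, sub_eq_zero]
  have hnodup : S.Nodup := by
    apply nodup_roots
    rw [hfact]
    have hsep2 : (X ^ (2*n-1) - C (4:ℂ)).Separable :=
      separable_X_pow_sub_C (4:ℂ) (Nat.cast_ne_zero.mpr (by omega)) (by norm_num)
    have hcopr : IsCoprime (X : ℂ[X]) (X ^ (2*n-1) - C 4) := by
      refine ⟨C (4⁻¹) * X ^ (2*n-2), -C (4⁻¹), ?_⟩
      have hx : (X : ℂ[X]) ^ (2*n-2) * X = X ^ (2*n-1) := by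
        rw [← pow_succ, show (2*n-2)+1 = 2*n-1 from by omega]
      calc C (4⁻¹:ℂ) * X ^ (2*n-2) * X + -C (4⁻¹) * (X ^ (2*n-1) - C 4)
          = C (4⁻¹:ℂ) * (X ^ (2*n-2) * X) + -C (4⁻¹) * (X ^ (2*n-1) - C 4) := by ring
        _ = 1 := by rw [hx]; ring_nf; rw [← C_mul, ← C_1]; norm_num
    exact separable_X.mul hsep2 hcopr
  have hcp := charpoly_smul_pow (M n) c hc0 p hp0
  set T := S.map (fun l => c * l ^ p) with hT
  have hmult : ∀ z : ℂ, (c • (M n)^p).charpoly.rootMultiplicity z = T.count z := by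
    intro z
    rw [hcp, ← Polynomial.count_roots, roots_multiset_prod_X_sub_C]
  constructor
  · intro hsimple
    by_contra hcop
    set d := Nat.gcd p (2*n-1) with hd
    have hd1 : d ≠ 1 := fun h => hcop h
    have hd0 : d ≠ 0 := fun h => hp0 ((Nat.gcd_eq_zero_iff.mp h).1)
    have hd2 : 2 ≤ d := by omega
    have hζ := Complex.isPrimitiveRoot_exp d hd0
    set ζ := Complex.exp (2 * Real.pi * Complex.I / d) with hζdef
    have hζd : ζ ^ d = 1 := hζ.pow_eq_one
    have hζ1 : ζ ≠ 1 := hζ.ne_one hd2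
    have hζp : ζ ^ p = 1 := by
      obtain ⟨k, hk⟩ := Nat.gcd_dvd_left p (2*n-1)
      rw [hk, pow_mul, ← hd, hζd, one_pow]
    have hζm : ζ ^ (2*n-1) = 1 := by
      obtain ⟨k, hk⟩ := Nat.gcd_dvd_right p (2*n-1)
      rw [hk, pow_mul, ← hd, hζd, one_pow]
    obtain ⟨l0, hl0⟩ : ∃ z : ℂ, z ^ (2*n-1) = 4 := by
      obtain ⟨z, hz⟩ := IsAlgClosed.exists_root (X ^ (2*n-1) - C (4:ℂ))
        (by rw [degree_X_pow_sub_C (by omega : 0 < 2*n-1)]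
            exact_mod_cast (by omega : ¬(2*n-1 : ℕ) = 0))
      exact ⟨z, by simpa [IsRoot, sub_eq_zero] using hz⟩
    have hl0ne : l0 ≠ 0 := by
      intro h
      rw [h, zero_pow (by omega : 2*n-1 ≠ 0)] at hl0
      norm_num at hl0
    have hmem1 : l0 ∈ S := (hroot_iff l0).mpr (Or.inr hl0)
    have hmem2 : ζ * l0 ∈ S := (hroot_iff _).mpr (Or.inr (by rw [mul_pow, hζm, one_mul, hl0]))
    have hne : ζ * l0 ≠ l0 := by
      intro h
      apply hζ1
      have : ζ * l0 = 1 * l0 := by rw [h, one_mul]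
      exact mul_right_cancel₀ hl0ne this
    have e2 : ζ * l0 ∈ S.erase l0 := (Multiset.mem_erase_of_ne hne).mpr hmem2
    have hcount : 2 ≤ T.count (c * l0 ^ p) := by
      have e1 : l0 ::ₘ S.erase l0 = S := Multiset.cons_erase hmem1
      have : T = (c * l0 ^ p) ::ₘ (S.erase l0).map (fun l => c * l ^ p) := by
        rw [hT, ← e1, Multiset.map_cons, Multiset.erase_cons_head]
      rw [this, Multiset.count_cons_self]
      have hmm : (c * l0 ^ p) ∈ (S.erase l0).map (fun l => c * l ^ p) := by
        have : c * (ζ * l0) ^ p = c * l0 ^ p := by rw [mul_pow, hζp, one_mul]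
        exact this ▸ Multiset.mem_map_of_mem _ e2
      have := Multiset.one_le_count_iff_mem.mpr hmm
      omega
    have := hsimple (c * l0 ^ p)
    rw [hmult] at this
    omega
  · intro hcop z
    rw [hmult]
    refine Multiset.nodup_iff_count_le_one.mp ?_ z
    rw [hT]
    refine Multiset.Nodup.map_on ?_ hnodup
    intro x hx y hy hxy
    have hxy' : x ^ p = y ^ p := mul_left_cancel₀ hc0 hxy
    rcases (hroot_iff x).mp hx with hx0 | hx4 <;> rcases (hroot_iff y).mp hy with hy0 | hy4
    · rw [hx0, hy0]
    · exfalso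
      have hyne : y ≠ 0 := by
        intro h; rw [h, zero_pow (by omega : 2*n-1 ≠ 0)] at hy4; norm_num at hy4
      rw [hx0, zero_pow hp0] at hxy'
      exact pow_ne_zero p hyne hxy'.symm
    · exfalso
      have hxne : x ≠ 0 := by
        intro h; rw [h, zero_pow (by omega : 2*n-1 ≠ 0)] at hx4; norm_num at hx4
      rw [hy0, zero_pow hp0] at hxy'
      exact pow_ne_zero p hxne hxy'
    · have hyne : y ≠ 0 := by
        intro h; rw [h, zero_pow (by omega : 2*n-1 ≠ 0)] at hy4; norm_num at hy4
      have h1 : (x / y) ^ p = 1 := by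
        rw [div_pow, hxy', div_self (pow_ne_zero p hyne)]
      have h2 : (x / y) ^ (2*n-1) = 1 := by
        rw [div_pow, hx4, hy4, div_self (by norm_num)]
      have ho1 : orderOf (x / y) ∣ p := orderOf_dvd_of_pow_eq_one h1
      have ho2 : orderOf (x / y) ∣ (2*n-1) := orderOf_dvd_of_pow_eq_one h2
      have : orderOf (x / y) ∣ 1 := hcop ▸ Nat.dvd_gcd ho1 ho2
      have hord : orderOf (x / y) = 1 := Nat.dvd_one.mp this
      have : x / y = 1 := orderOf_eq_one_iff.mp hord
      field_simp at this
      exact this
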